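/- Let a≥0 be real. Let (Q_n)_{n≥0} be a nonincreasing sequence of nonnegative reals with Q_{−1}:=0, and let (L_n)_{n≥0} be nonnegative reals with L₀ = Q₀, L_n ≤ Q_{n−1} for every n≥1, and additionally Q_n ≤ L_n for every n≥1. Then for every integer n≥1 and all reals V₀,…,V_n: ( Σ_{l=0}^{n−1} e^{−a l}(Q_l − Q_{l−1}) V_{n−l} + e^{−a n}(L_n − Q_{n−1}) V₀ ) · V_n ≥ (1/2) Σ_{l=0}^{n} e^{−a l} Q_l V_{n−l}² − (1/2) Σ_{l=0}^{n−1} e^{−a l} Q_l V_{n−1−l}² + (L_n/2) V_n². -/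

import Mathlib

open Real Finset

private lemma aux_term (w c s x y : ℝ) (hw0 : 0 < w) (hw1 : w ≤ 1)
    (hc : c ≤ 0) (hs : s ≤ w * c) :
    (1/2) * s * x^2 + (1/2) * c * y^2 ≤ w * c * x * y := by
  nlinarith [mul_nonneg (sub_nonneg.2 hs) (sq_nonneg x),
    mul_nonneg (mul_nonneg (sub_nonneg.2 hw1) (neg_nonneg.2 hc)) (sq_nonneg y),
    mul_nonneg (mul_nonneg hw0.le (neg_nonneg.2 hc)) (sq_nonneg (x - y))]

private lemma sum_telescope_Q (Q : ℕ → ℝ) :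
    ∀ m, 1 ≤ m → ∑ l ∈ Finset.range m, (if l = 0 then Q 0 else Q l - Q (l - 1)) = Q (m - 1) := by
  intro m hm
  induction m with
  | zero => omega
  | succ k ih =>
    rcases Nat.eq_zero_or_pos k with hk | hk
    · subst hk; simp
    · rw [Finset.sum_range_succ, ih hk]
      have hk0 : k ≠ 0 := by omega
      simp only [hk0, if_false, Nat.add_sub_cancel]
      ring

/-- discrete energy inequality for the substantial-derivative quadrature.
`Q` is a nonincreasing sequence of nonnegative reals (convention `Q_{−1} = 0` encoded
by the `if l = 0` clause), `L` is nonnegative with `L 0 = Q 0`, `L (n+1) ≤ Q n`, and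
additionally `Q (n+1) ≤ L (n+1)`. -/
theorem discrete_substantial_energy_inequality
    (a : ℝ) (ha : 0 ≤ a)
    (Q L : ℕ → ℝ)
    (hQnn : ∀ n, 0 ≤ Q n) (hQmono : ∀ n, Q (n + 1) ≤ Q n)
    (hLnn : ∀ n, 0 ≤ L n) (hL0 : L 0 = Q 0) (hLQ : ∀ n, L (n + 1) ≤ Q n)
    (hQL : ∀ n, Q (n + 1) ≤ L (n + 1))
    (n : ℕ) (hn : 1 ≤ n) (V : ℕ → ℝ) :
    ((∑ l ∈ Finset.range n,
        Real.exp (-(a * (l : ℝ))) * (Q l - if l = 0 then 0 else Q (l - 1)) * V (n - l))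
      + Real.exp (-(a * (n : ℝ))) * (L n - Q (n - 1)) * V 0) * V n
    ≥ (1 / 2) * (∑ l ∈ Finset.range (n + 1),
          Real.exp (-(a * (l : ℝ))) * Q l * (V (n - l)) ^ 2)
      - (1 / 2) * (∑ l ∈ Finset.range n,
          Real.exp (-(a * (l : ℝ))) * Q l * (V (n - 1 - l)) ^ 2)
      + (L n / 2) * (V n) ^ 2 := by
  set w : ℕ → ℝ := fun l => Real.exp (-(a * (l : ℝ))) with hwdef
  have hwrw : ∀ l : ℕ, Real.exp (-(a * (l : ℝ))) = w l := fun l => rfl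
  simp only [hwrw]
  have hwpos : ∀ l, 0 < w l := fun l => Real.exp_pos _
  have hwle1 : ∀ l : ℕ, w l ≤ 1 := by
    intro l
    have : -(a * (l : ℝ)) ≤ 0 := neg_nonpos.2 (mul_nonneg ha (Nat.cast_nonneg l))
    simpa [hwdef] using Real.exp_le_one_iff.mpr this
  have hwmono : ∀ k l : ℕ, k ≤ l → w l ≤ w k := by
    intro k l h
    apply Real.exp_le_exp.mpr
    have : a * (k : ℝ) ≤ a * (l : ℝ) :=
      mul_le_mul_of_nonneg_left (by exact_mod_cast h) ha
    linarith
  set c : ℕ → ℝ := fun l =>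
    if l = 0 then Q 0 else if l = n then L n - Q (n - 1) else Q l - Q (l - 1) with hcdef
  have hn0 : n ≠ 0 := by omega
  -- LHS as a single sum
  have hL : ((∑ l ∈ Finset.range n,
        w l * (Q l - if l = 0 then 0 else Q (l - 1)) * V (n - l))
      + w n * (L n - Q (n - 1)) * V 0) * V n
      = ∑ l ∈ Finset.range (n + 1), w l * c l * V (n - l) * V n := by
    rw [← Finset.sum_mul]
    congr 1
    rw [Finset.sum_range_succ]
    congr 1
    · apply Finset.sum_congr rfl
      intro l hl
      have hln : l ≠ n := (Finset.mem_range.1 hl).ne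
      by_cases h0 : l = 0 <;> simp [hcdef, h0, hln]
    · simp [hcdef, hn0, Nat.sub_self]
  rw [hL]
  -- RHS as a single sum
  have hsumc : ∑ l ∈ Finset.range (n + 1), c l = L n := by
    rw [Finset.sum_range_succ]
    have h1 : ∑ l ∈ Finset.range n, c l = Q (n - 1) := by
      rw [Finset.sum_congr rfl
        (fun l hl => by simp [hcdef, (Finset.mem_range.1 hl).ne] :
          ∀ l ∈ Finset.range n, c l = if l = 0 then Q 0 else Q l - Q (l - 1))]
      exact sum_telescope_Q Q n hn
    rw [h1]
    simp only [hcdef, hn0, if_false, if_pos rfl, if_true, eq_self_iff_true]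
    ring
  have hshift : ∑ l ∈ Finset.range (n + 1),
      (if l = 0 then (0 : ℝ) else w (l - 1) * Q (l - 1)) * (V (n - l)) ^ 2
      = ∑ l ∈ Finset.range n, w l * Q l * (V (n - 1 - l)) ^ 2 := by
    rw [Finset.sum_range_succ']
    simp only [eq_self_iff_true, if_true, zero_mul, add_zero, Nat.succ_ne_zero,
      if_false, Nat.add_sub_cancel]
    apply Finset.sum_congr rfl
    intro i _
    have : n - (i + 1) = n - 1 - i := by omega
    rw [this]
  have hR : (1 / 2) * (∑ l ∈ Finset.range (n + 1), w l * Q l * (V (n - l)) ^ 2)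
      - (1 / 2) * (∑ l ∈ Finset.range n, w l * Q l * (V (n - 1 - l)) ^ 2)
      + (L n / 2) * (V n) ^ 2
      = ∑ l ∈ Finset.range (n + 1),
        ((1/2) * (w l * Q l - if l = 0 then (0 : ℝ) else w (l - 1) * Q (l - 1))
            * (V (n - l)) ^ 2
          + (1/2) * c l * (V n) ^ 2) := by
    rw [Finset.sum_add_distrib]
    have e1 : ∑ l ∈ Finset.range (n + 1),
        (1/2) * (w l * Q l - if l = 0 then (0 : ℝ) else w (l - 1) * Q (l - 1))
          * (V (n - l)) ^ 2
        = (1 / 2) * (∑ l ∈ Finset.range (n + 1), w l * Q l * (V (n - l)) ^ 2)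
          - (1 / 2) * (∑ l ∈ Finset.range n, w l * Q l * (V (n - 1 - l)) ^ 2) := by
      rw [← hshift, Finset.mul_sum, Finset.mul_sum, ← Finset.sum_sub_distrib]
      apply Finset.sum_congr rfl
      intro l _
      ring
    have e2 : ∑ l ∈ Finset.range (n + 1), (1/2) * c l * (V n) ^ 2
        = (L n / 2) * (V n) ^ 2 := by
      have : ∑ l ∈ Finset.range (n + 1), (1/2) * c l * (V n) ^ 2
          = (∑ l ∈ Finset.range (n + 1), c l) * ((1/2) * (V n) ^ 2) := by
        rw [Finset.sum_mul]
        apply Finset.sum_congr rfl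
        intro l _
        ring
      rw [this, hsumc]
      ring
    rw [e1, e2]
  rw [ge_iff_le, hR]
  -- termwise comparison
  apply Finset.sum_le_sum
  intro l hl
  have hl' : l ≤ n := by
    have := Finset.mem_range.1 hl; omega
  by_cases h0 : l = 0
  · subst h0
    have hw0 : w 0 = 1 := by simp [hwdef]
    simp only [hcdef, if_pos rfl, hw0, Nat.sub_zero, eq_self_iff_true, if_true]
    ring_nf
    exact le_refl _
  · -- l ≥ 1
    obtain ⟨k, rfl⟩ : ∃ k, l = k + 1 := ⟨l - 1, by omega⟩
    have hcneg : c (k + 1) ≤ 0 := by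
      by_cases hkn : k + 1 = n
      · simp only [hcdef, Nat.succ_ne_zero, if_false, if_pos hkn]
        have : L n ≤ Q (n - 1) := by
          have h := hLQ (n - 1)
          have hn1 : n - 1 + 1 = n := by omega
          rwa [hn1] at h
        linarith
      · simp only [hcdef, Nat.succ_ne_zero, if_false, hkn, if_neg hkn,
          Nat.add_sub_cancel]
        have := hQmono k
        linarith
    have hs : w (k + 1) * Q (k + 1) - w k * Q k ≤ w (k + 1) * c (k + 1) := by
      have hwk : w (k + 1) * Q k ≤ w k * Q k :=
        mul_le_mul_of_nonneg_right (hwmono k (k + 1) (by omega)) (hQnn k)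
      by_cases hkn : k + 1 = n
      · simp only [hcdef, Nat.succ_ne_zero, if_false, if_pos hkn]
        have hQn1 : Q (n - 1) = Q k := by rw [← hkn]; simp
        have hQLn : Q (k + 1) ≤ L n := by rw [← hkn]; exact hQL k
        have h1 : w (k + 1) * Q (k + 1) ≤ w (k + 1) * L n :=
          mul_le_mul_of_nonneg_left hQLn (hwpos _).le
        rw [hQn1]
        nlinarith [hwk, h1]
      · simp only [hcdef, Nat.succ_ne_zero, if_false, if_neg hkn,
          Nat.add_sub_cancel]
        nlinarith [hwk]
    have hif : (if k + 1 = 0 then (0 : ℝ) else w (k + 1 - 1) * Q (k + 1 - 1))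
        = w k * Q k := by simp
    rw [hif]
    exact aux_term (w (k + 1)) (c (k + 1))
      (w (k + 1) * Q (k + 1) - w k * Q k) (V (n - (k + 1))) (V n)
      (hwpos _) (hwle1 _) hcneg hs
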